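/- arXiv:2001.03478 — 5 statements merged into one kernel-verified Lean document; each statement's English description precedes it below -/
import Mathlib

section
/- Let ε₀ < 0, Q > 0, ℓ ≠ 0, and define Δ_θ = (1 - (Q + ℓ²)/ε₀)/2 and z₊ = Δ_θ - √(Δ_θ² + Q/ε₀). Then Δ_θ² + Q/ε₀ ≥ 0 implies 0 < z₊ < 1, so the pendular motion with negative ε₀ is bounded strictly away from the poles. -/
/-- For pendular Kerr polar motion with ε₀ < 0 and Q > 0, if the discriminant
Δ_θ² + Q/ε₀ is nonnegative then z₊ = Δ_θ - √(Δ_θ² + Q/ε₀) satisfies 0 < z₊ < 1. -/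
theorem pendular_root_negative_eps
    (ε₀ Q ℓ : ℝ) (hε : ε₀ < 0) (hQ : Q > 0) (hℓ : ℓ ≠ 0)
    (Δθ : ℝ) (hΔθ : Δθ = (1 - (Q + ℓ ^ 2) / ε₀) / 2)
    (zp : ℝ) (hzp : zp = Δθ - Real.sqrt (Δθ ^ 2 + Q / ε₀))
    (hdisc : Δθ ^ 2 + Q / ε₀ ≥ 0) :
    0 < zp ∧ zp < 1 := by
  have hℓ2 : (0:ℝ) < ℓ ^ 2 := by positivity
  have hd : Q / ε₀ < 0 := div_neg_of_pos_of_neg hQ hε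
  have he : ℓ ^ 2 / ε₀ < 0 := div_neg_of_pos_of_neg hℓ2 hε
  have hsum : (Q + ℓ ^ 2) / ε₀ = Q / ε₀ + ℓ ^ 2 / ε₀ := add_div _ _ _
  have hΔpos : 0 < Δθ := by rw [hΔθ, hsum]; linarith
  constructor
  · have h1 : Δθ ^ 2 + Q / ε₀ < Δθ ^ 2 := by linarith
    have hs : Real.sqrt (Δθ ^ 2 + Q / ε₀) < Δθ := by
      calc Real.sqrt (Δθ ^ 2 + Q / ε₀) < Real.sqrt (Δθ ^ 2) :=
            Real.sqrt_lt_sqrt hdisc h1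
        _ = Δθ := Real.sqrt_sq hΔpos.le
    rw [hzp]; linarith
  · have h2 : (Δθ - 1) ^ 2 < Δθ ^ 2 + Q / ε₀ := by
      have h2Δ : 2 * Δθ = 1 - (Q / ε₀ + ℓ ^ 2 / ε₀) := by rw [hΔθ, hsum]; ring
      nlinarith [h2Δ]
    have hs : Δθ - 1 < Real.sqrt (Δθ ^ 2 + Q / ε₀) := by
      have h3 := Real.sqrt_lt_sqrt (sq_nonneg (Δθ - 1)) h2
      rw [Real.sqrt_sq_eq_abs] at h3
      linarith [le_abs_self (Δθ - 1)]
    rw [hzp]; linarith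
end

section
/- Let Q ≥ 0, μ ≥ 0, M > 0 with Q + M²μ² > 0, E ∈ ℝ, ℓ ∈ ℝ, ℓ* = (2/√3)√(M²μ² + Q), C = (3/4)(ℓ*² - ℓ²), and v_R(R) = E² + 2EℓR - C R². If v_R(R) ≥ 0 for all R ≥ 0 (i.e., the radial range is unbounded above with the geodesic reaching R → ∞), and the orbit is future-oriented (E + ℓR > 0 for all R > 0 in the orbit), then ℓ ≥ ℓ*. -/
/-- Proposition 4: a radially unbounded future-oriented NHEK geodesic
(v_R ≥ 0 on all R ≥ 0 and E + ℓR > 0 for R > 0) must be prograde and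
critical or supercritical: ℓ ≥ ℓ*. -/
theorem unbounded_nhek_geodesics_supercritical
    (Q M μ E ℓ : ℝ) (hQ : Q ≥ 0) (hμ : μ ≥ 0) (hM : M > 0)
    (hQM : Q + M ^ 2 * μ ^ 2 > 0)
    (lstar : ℝ) (hlstar : lstar = (2 / Real.sqrt 3) * Real.sqrt (M ^ 2 * μ ^ 2 + Q))
    (C : ℝ) (hC : C = (3 / 4) * (lstar ^ 2 - ℓ ^ 2))
    (hvR : ∀ R : ℝ, R ≥ 0 → E ^ 2 + 2 * E * ℓ * R - C * R ^ 2 ≥ 0)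
    (hfuture : ∀ R : ℝ, R > 0 → E + ℓ * R > 0) :
    ℓ ≥ lstar := by
  -- Step 1: ℓ ≥ 0 from future orientation
  have hl0 : ℓ ≥ 0 := by
    by_contra h
    push_neg at h
    have hnl : -ℓ > 0 := by linarith
    have hR : (|E| + 1) / (-ℓ) > 0 := div_pos (by positivity) hnl
    have := hfuture _ hR
    have hEq : ℓ * ((|E| + 1) / (-ℓ)) = -(|E| + 1) := by
      field_simp [ne_of_gt hnl]
      ring_nf
      rw [mul_inv_cancel₀ (ne_of_lt h)]
    rw [hEq] at this
    have : |E| < E := by linarith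
    linarith [le_abs_self E]
  -- Step 2: C ≤ 0
  have hC0 : C ≤ 0 := by
    by_contra h
    push_neg at h
    set R := max 1 ((E ^ 2 + 2 * |E * ℓ| + 1) / C) with hRdef
    have hR1 : R ≥ 1 := le_max_left _ _
    have hR0 : R ≥ 0 := by linarith
    have hRge : R ≥ (E ^ 2 + 2 * |E * ℓ| + 1) / C := le_max_right _ _
    have hCR : C * R ≥ E ^ 2 + 2 * |E * ℓ| + 1 := by
      rw [ge_iff_le, div_le_iff₀ h] at hRge
      linarith [mul_comm C R ▸ hRge]
    have hv := hvR R hR0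
    have hCR2 : C * R ^ 2 ≥ (E ^ 2 + 2 * |E * ℓ| + 1) * R := by
      have := mul_le_mul_of_nonneg_right hCR hR0
      nlinarith
    have habs : 2 * E * ℓ * R ≤ 2 * |E * ℓ| * R := by
      have := le_abs_self (E * ℓ)
      nlinarith
    nlinarith [le_abs_self (E * ℓ), abs_nonneg (E * ℓ)]
  -- Step 3: from C ≤ 0, lstar² ≤ ℓ²
  have hsq : lstar ^ 2 ≤ ℓ ^ 2 := by nlinarith
  have hls0 : lstar ≥ 0 := by
    rw [hlstar]
    positivity
  nlinarith
end

section
/- Let M > 0, μ > 0, Q ≥ 0, and define z₊(ℓ, Q) as the positive root of v_θ(z) = -ℓ²z + (Q + ((ℓ² - 4M²μ²)/4) z)(1 - z). Then lim_{ℓ→0} z₊(ℓ, Q) = Q/(M²μ²) if Q < M²μ², and equals 1 if Q ≥ M²μ². -/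
open Filter

/-- Small-ℓ limit of the maximal polar value z₊(ℓ, Q) of NHEK pendular motion:
z₊ → Q/(M²μ²) if Q < M²μ², and z₊ → 1 if Q ≥ M²μ². -/
theorem zplus_small_angular_momentum_limit
    (M μ Q : ℝ) (hM : M > 0) (hμ : μ > 0) (hQ : Q ≥ 0)
    (zp : ℝ → ℝ)
    (hzp : ∀ ℓ : ℝ, zp ℓ = (3 * ℓ ^ 2 + 4 * (Q + M ^ 2 * μ ^ 2) -
        Real.sqrt (9 * ℓ ^ 4 + 16 * (M ^ 2 * μ ^ 2 - Q) ^ 2 +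
          8 * ℓ ^ 2 * (3 * M ^ 2 * μ ^ 2 + 5 * Q))) /
        (2 * (4 * M ^ 2 * μ ^ 2 - ℓ ^ 2))) :
    (Q < M ^ 2 * μ ^ 2 → Tendsto zp (nhds 0) (nhds (Q / (M ^ 2 * μ ^ 2)))) ∧
    (Q ≥ M ^ 2 * μ ^ 2 → Tendsto zp (nhds 0) (nhds 1)) := by
  set m : ℝ := M ^ 2 * μ ^ 2 with hmdef
  have hm : 0 < m := by positivity
  have hfun : zp = fun ℓ : ℝ => (3 * ℓ ^ 2 + 4 * (Q + m) -
      Real.sqrt (9 * ℓ ^ 4 + 16 * (m - Q) ^ 2 + 8 * ℓ ^ 2 * (3 * m + 5 * Q))) /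
      (2 * (4 * m - ℓ ^ 2)) := funext fun ℓ => by rw [hzp ℓ, hmdef]; ring_nf
  have hcont : ContinuousAt zp 0 := by
    rw [hfun]
    apply ContinuousAt.div
    · exact ContinuousAt.sub (by fun_prop)
        (Real.continuous_sqrt.continuousAt.comp (by fun_prop))
    · fun_prop
    · simp only [ne_eq]
      norm_num
      positivity
  have hkey : Tendsto zp (nhds 0)
      (nhds ((4 * (Q + m) - Real.sqrt (16 * (m - Q) ^ 2)) / (2 * (4 * m)))) := by
    have := hcont.tendsto
    convert this using 2
    rw [hfun]
    norm_num
  have hsq : Real.sqrt (16 * (m - Q) ^ 2) = |4 * (m - Q)| := by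
    rw [show (16 : ℝ) * (m - Q) ^ 2 = (4 * (m - Q)) ^ 2 by ring, Real.sqrt_sq_eq_abs]
  constructor
  · intro h
    have habs : |4 * (m - Q)| = 4 * (m - Q) := abs_of_nonneg (by linarith)
    have : (4 * (Q + m) - Real.sqrt (16 * (m - Q) ^ 2)) / (2 * (4 * m)) = Q / m := by
      rw [hsq, habs]; field_simp; ring
    rwa [this] at hkey
  · intro h
    have habs : |4 * (m - Q)| = -(4 * (m - Q)) := abs_of_nonpos (by linarith)
    have : (4 * (Q + m) - Real.sqrt (16 * (m - Q) ^ 2)) / (2 * (4 * m)) = 1 := by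
      rw [hsq, habs]; field_simp; ring
    rwa [this] at hkey
end

section
/- Let M > 0, μ > 0, and Q with 0 ≤ Q ≤ M²μ²/2. Set ℓ* = (2/√3)√(Q + M²μ²) and define z₊ = Q / [(3/4)ℓ*² + √((9/16)ℓ*⁴ - (ℓ*² Q)/2 + Q²)]. Then z₊ is an increasing function of Q on [0, M²μ²/2], z₊ = 0 at Q = 0, and z₊ = 3 - 2√2 at Q = M²μ²/2. -/
/-- The ISSO polar bound z₊ = cos²θ_min as a function of the Carter constant Q
(with ℓ = ℓ*(Q)) is strictly increasing on [0, M²μ²/2], vanishes at Q = 0,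
and equals 3 - 2√2 at Q = M²μ²/2. -/
theorem isso_polar_bound_monotone
    (M μ : ℝ) (hM : M > 0) (hμ : μ > 0)
    (lstar : ℝ → ℝ)
    (hlstar : ∀ Q : ℝ, lstar Q = (2 / Real.sqrt 3) * Real.sqrt (Q + M ^ 2 * μ ^ 2))
    (zp : ℝ → ℝ)
    (hzp : ∀ Q : ℝ, zp Q = Q / ((3 / 4) * (lstar Q) ^ 2 +
        Real.sqrt ((9 / 16) * (lstar Q) ^ 4 - (lstar Q) ^ 2 * Q / 2 + Q ^ 2))) :
    StrictMonoOn zp (Set.Icc 0 (M ^ 2 * μ ^ 2 / 2)) ∧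
    zp 0 = 0 ∧
    zp (M ^ 2 * μ ^ 2 / 2) = 3 - 2 * Real.sqrt 2 := by
  set c := M ^ 2 * μ ^ 2 with hc
  have hcpos : 0 < c := by positivity
  have key : ∀ Q : ℝ, 0 ≤ Q →
      zp Q = Q / (Q + c + Real.sqrt ((4/3)*Q^2 + (4/3)*Q*c + c^2)) := by
    intro Q hQ
    have hQc : 0 ≤ Q + c := by linarith
    have h3 : Real.sqrt 3 ^ 2 = 3 := Real.sq_sqrt (by norm_num)
    have hs : Real.sqrt (Q + c) ^ 2 = Q + c := Real.sq_sqrt hQc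
    have hl2 : (lstar Q) ^ 2 = (4/3) * (Q + c) := by
      rw [hlstar, mul_pow, div_pow, h3, hs]; ring
    have hl4 : (lstar Q) ^ 4 = ((4/3) * (Q + c))^2 := by
      rw [show (lstar Q)^4 = ((lstar Q)^2)^2 by ring, hl2]
    rw [hzp, hl2, hl4]
    have harg : (9/16) * ((4/3)*(Q+c))^2 - (4/3)*(Q+c) * Q / 2 + Q^2
        = (4/3)*Q^2 + (4/3)*Q*c + c^2 := by ring
    rw [harg]
    congr 1
    ring
  have hDpos : ∀ Q : ℝ, 0 ≤ Q →
      0 < Q + c + Real.sqrt ((4/3)*Q^2 + (4/3)*Q*c + c^2) := by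
    intro Q hQ
    have := Real.sqrt_nonneg ((4/3)*Q^2 + (4/3)*Q*c + c^2)
    linarith
  refine ⟨?_, ?_, ?_⟩
  · intro a ha b hb hab
    rw [key a ha.1, key b hb.1]
    rcases eq_or_lt_of_le ha.1 with h0 | h0
    · rw [← h0, zero_div]
      exact div_pos (by linarith [h0 ▸ hab]) (hDpos b hb.1)
    · rw [div_lt_div_iff₀ (hDpos a ha.1) (hDpos b hb.1)]
      have hDa : 0 ≤ (4/3)*a^2 + (4/3)*a*c + c^2 := by nlinarith [ha.1, hcpos]
      have hDb : 0 ≤ (4/3)*b^2 + (4/3)*b*c + c^2 := by nlinarith [hb.1, hcpos]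
      have hcmp : a^2 * ((4/3)*b^2 + (4/3)*b*c + c^2)
          < b^2 * ((4/3)*a^2 + (4/3)*a*c + c^2) := by
        have hb0 : 0 < b := lt_trans h0 hab
        nlinarith [mul_pos (mul_pos (mul_pos h0 hb0) hcpos) (sub_pos.mpr hab),
          mul_pos (mul_pos (mul_pos hcpos hcpos) (sub_pos.mpr hab)) (by linarith : (0:ℝ) < a + b)]
      have h1 : a * Real.sqrt ((4/3)*b^2 + (4/3)*b*c + c^2)
          = Real.sqrt (a^2 * ((4/3)*b^2 + (4/3)*b*c + c^2)) := by
        rw [Real.sqrt_mul (sq_nonneg a), Real.sqrt_sq h0.le]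
      have h2 : b * Real.sqrt ((4/3)*a^2 + (4/3)*a*c + c^2)
          = Real.sqrt (b^2 * ((4/3)*a^2 + (4/3)*a*c + c^2)) := by
        rw [Real.sqrt_mul (sq_nonneg b), Real.sqrt_sq (by linarith : (0:ℝ) ≤ b)]
      have h3 : a * Real.sqrt ((4/3)*b^2 + (4/3)*b*c + c^2)
          < b * Real.sqrt ((4/3)*a^2 + (4/3)*a*c + c^2) := by
        rw [h1, h2]
        exact Real.sqrt_lt_sqrt (by positivity) hcmp
      nlinarith [h3, hab, hcpos]
  · rw [key 0 le_rfl, zero_div]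
  · rw [key (c/2) (by linarith)]
    have harg : (4/3)*(c/2)^2 + (4/3)*(c/2)*c + c^2 = 2 * c^2 := by ring
    rw [harg]
    have hs : Real.sqrt (2 * c^2) = Real.sqrt 2 * c := by
      rw [Real.sqrt_mul (by norm_num), Real.sqrt_sq hcpos.le]
    rw [hs]
    have hs2 : Real.sqrt 2 ^ 2 = 2 := Real.sq_sqrt (by norm_num)
    have hden : c/2 + c + Real.sqrt 2 * c > 0 := by
      have := Real.sqrt_nonneg 2; nlinarith
    rw [div_eq_iff hden.ne']
    nlinarith [hs2]
end

section
/- Let ℓ > ℓ* > 0, C = (3/4)(ℓ*² - ℓ²) < 0, κ > 0, and define the near-NHEK radial potential v_{R;κ}(R) = (e + ℓκ)² + 2eℓ(R - κ) + (3/4)(ℓ² - ℓ*²)(R - κ)(R + κ). Then v_{R;κ} has a double root (in R) if and only if e = ±κ√(-C), and for e = -κ√(-C) the double root is R₀ = κℓ/√(-C), which satisfies R₀ > κ. -/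
/-- Near-NHEK spherical orbits: the radial potential
v_{R;κ}(R) = (e + ℓκ)² + 2eℓ(R - κ) + (3/4)(ℓ² - ℓ*²)(R - κ)(R + κ)
has a double root iff e = ±κ√(-C), and for e = -κ√(-C) the double root is
R₀ = κℓ/√(-C) > κ. -/
theorem near_nhek_spherical_orbit
    (ℓ lstar κ e : ℝ) (hlstar : lstar > 0) (hℓ : ℓ > lstar) (hκ : κ > 0)
    (C : ℝ) (hC : C = (3 / 4) * (lstar ^ 2 - ℓ ^ 2))
    (v : ℝ → ℝ)
    (hv : ∀ R : ℝ, v R = (e + ℓ * κ) ^ 2 + 2 * e * ℓ * (R - κ) +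
        (3 / 4) * (ℓ ^ 2 - lstar ^ 2) * (R - κ) * (R + κ)) :
    ((∃ R₀ : ℝ, ∀ R : ℝ, v R = -C * (R - R₀) ^ 2) ↔
      (e = κ * Real.sqrt (-C) ∨ e = -(κ * Real.sqrt (-C)))) ∧
    (e = -(κ * Real.sqrt (-C)) →
      (∀ R : ℝ, v R = -C * (R - κ * ℓ / Real.sqrt (-C)) ^ 2) ∧
      κ * ℓ / Real.sqrt (-C) > κ) := by
  set s := Real.sqrt (-C) with hsdef
  have hCneg : C < 0 := by nlinarith
  have hs2 : s ^ 2 = -C := Real.sq_sqrt (by linarith)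
  have hspos : 0 < s := Real.sqrt_pos.mpr (by linarith)
  have hsne : s ≠ 0 := ne_of_gt hspos
  have hsl : s < ℓ := by nlinarith
  have hlpos : 0 < ℓ := lt_trans hlstar hℓ
  have hrw : ∀ a R : ℝ, -C * (R - a / s) ^ 2 = (s * R - a) ^ 2 := by
    intro a R
    rw [← hs2]
    field_simp
  constructor
  · constructor
    · rintro ⟨R₀, h⟩
      have h0 := h 0; have h1 := h 1; have h2 := h (-1)
      rw [hv] at h0 h1 h2
      have hlin : e * ℓ = C * R₀ := by linear_combination (h1 - h2) / 4
      have hconst : e ^ 2 + ℓ ^ 2 * κ ^ 2 + C * κ ^ 2 = -C * R₀ ^ 2 := by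
        linear_combination h0 + κ ^ 2 * hC
      have hfac : (e - κ * s) * (e + κ * s) = 0 := by
        have key : e ^ 2 * (C + ℓ ^ 2) = -C * κ ^ 2 * (C + ℓ ^ 2) := by
          linear_combination C * hconst + (e * ℓ + C * R₀) * hlin
        have hpos : C + ℓ ^ 2 > 0 := by nlinarith
        have he2 : e ^ 2 = -C * κ ^ 2 := mul_right_cancel₀ (ne_of_gt hpos) key
        linear_combination he2 - κ ^ 2 * hs2
      rcases mul_eq_zero.mp hfac with h | h
      · left; linarith
      · right; linarith
    · rintro (he | he)
      · refine ⟨-(κ * ℓ) / s, fun R => ?_⟩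
        rw [hv, hrw, he]
        linear_combination (κ ^ 2 - R ^ 2) * hs2 + (R ^ 2 - κ ^ 2) * hC
      · refine ⟨κ * ℓ / s, fun R => ?_⟩
        rw [hv, hrw, he]
        linear_combination (κ ^ 2 - R ^ 2) * hs2 + (R ^ 2 - κ ^ 2) * hC
  · intro he
    constructor
    · intro R
      rw [hv, hrw, he]
      linear_combination (κ ^ 2 - R ^ 2) * hs2 + (R ^ 2 - κ ^ 2) * hC
    · rw [gt_iff_lt, lt_div_iff₀ hspos]
      nlinarith
end
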